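/- The code C = {011, 022, 033, 044, 105, 206, 307, 408, 550, 660, 770, 880} ⊆ {0,...,8}^3 is a 2-TA code: for every X ⊆ C with |X| ≤ 2 and every x ∈ desc(X), every codeword z ∈ C minimizing Hamming distance to x over C lies in X. -/

import Mathlib

def desc {Q : Type*} {ℓ : ℕ} (X : Set (Fin ℓ → Q)) : Set (Fin ℓ → Q) :=
  {d | ∀ i, ∃ x ∈ X, d i = x i}

def exampleCode : Set (Fin 3 → Fin 9) :=
  {![0,1,1], ![0,2,2], ![0,3,3], ![0,4,4], ![1,0,5], ![2,0,6],
   ![3,0,7], ![4,0,8], ![5,5,0], ![6,6,0], ![7,7,0], ![8,8,0]}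

def LN : List (ℕ × ℕ × ℕ) :=
  [(0,1,1),(0,2,2),(0,3,3),(0,4,4),(1,0,5),(2,0,6),(3,0,7),(4,0,8),(5,5,0),(6,6,0),(7,7,0),(8,8,0)]

def hdN (x y : ℕ × ℕ × ℕ) : ℕ :=
  (if x.1 = y.1 then 0 else 1) + (if x.2.1 = y.2.1 then 0 else 1) + (if x.2.2 = y.2.2 then 0 else 1)

def enc (x : Fin 3 → Fin 9) : ℕ × ℕ × ℕ := ((x 0 : ℕ), (x 1 : ℕ), (x 2 : ℕ))

lemma enc_inj {x y : Fin 3 → Fin 9} (h : enc x = enc y) : x = y := by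
  simp only [enc, Prod.mk.injEq] at h
  funext i
  fin_cases i <;> exact Fin.val_injective (by tauto)

lemma hd_eq (x y : Fin 3 → Fin 9) : hammingDist x y = hdN (enc x) (enc y) := by
  have : ∀ a b : Fin 9, (if a = b then 0 else 1) = (if (a:ℕ) = (b:ℕ) then 0 else 1) := by
    intro a b
    by_cases h : a = b
    · simp [h]
    · rw [if_neg h, if_neg (fun hv => h (Fin.val_injective hv))]
  simp only [hammingDist, Finset.card_filter, Fin.sum_univ_three, hdN, enc]
  by_cases h0 : x 0 = y 0 <;> by_cases h1 : x 1 = y 1 <;> by_cases h2 : x 2 = y 2 <;>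
    simp [h0, h1, h2, Fin.val_inj]

lemma mem_enc : ∀ y ∈ exampleCode, enc y ∈ LN := by
  intro y hy
  simp only [exampleCode, Set.mem_insert_iff, Set.mem_singleton_iff] at hy
  rcases hy with h|h|h|h|h|h|h|h|h|h|h|h <;> subst h <;> simp [enc, LN] <;> decide

lemma enc_surj : ∀ C ∈ LN, ∃ c ∈ exampleCode, enc c = C := by
  intro C hC
  simp only [LN, List.mem_cons, List.not_mem_nil, or_false] at hC
  rcases hC with h|h|h|h|h|h|h|h|h|h|h|h <;> subst h
  · exact ⟨![0,1,1], by simp [exampleCode], by decide⟩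
  · exact ⟨![0,2,2], by simp [exampleCode], by decide⟩
  · exact ⟨![0,3,3], by simp [exampleCode], by decide⟩
  · exact ⟨![0,4,4], by simp [exampleCode], by decide⟩
  · exact ⟨![1,0,5], by simp [exampleCode], by decide⟩
  · exact ⟨![2,0,6], by simp [exampleCode], by decide⟩
  · exact ⟨![3,0,7], by simp [exampleCode], by decide⟩
  · exact ⟨![4,0,8], by simp [exampleCode], by decide⟩
  · exact ⟨![5,5,0], by simp [exampleCode], by decide⟩
  · exact ⟨![6,6,0], by simp [exampleCode], by decide⟩
  · exact ⟨![7,7,0], by simp [exampleCode], by decide⟩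
  · exact ⟨![8,8,0], by simp [exampleCode], by decide⟩

set_option maxRecDepth 100000 in
set_option maxHeartbeats 2000000 in
lemma keyN : ∀ A ∈ LN, ∀ B ∈ LN, ∀ s0 s1 s2 : Bool, ∀ Z ∈ LN,
    (∀ C ∈ LN, hdN (if s0 then A.1 else B.1, if s1 then A.2.1 else B.2.1,
        if s2 then A.2.2 else B.2.2) Z ≤
      hdN (if s0 then A.1 else B.1, if s1 then A.2.1 else B.2.1,
        if s2 then A.2.2 else B.2.2) C) → Z = A ∨ Z = B := by decide

lemma key_pair {a b : Fin 3 → Fin 9} (ha : a ∈ exampleCode) (hb : b ∈ exampleCode)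
    {x : Fin 3 → Fin 9} (hx : ∀ i, x i = a i ∨ x i = b i)
    {z : Fin 3 → Fin 9} (hz : z ∈ exampleCode)
    (hmin : ∀ c ∈ exampleCode, hammingDist x z ≤ hammingDist x c) :
    z = a ∨ z = b := by
  classical
  set s0 : Bool := decide (x 0 = a 0) with hs0
  set s1 : Bool := decide (x 1 = a 1) with hs1
  set s2 : Bool := decide (x 2 = a 2) with hs2
  have hex : enc x = (if s0 then (enc a).1 else (enc b).1,
      if s1 then (enc a).2.1 else (enc b).2.1, if s2 then (enc a).2.2 else (enc b).2.2) := by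
    simp only [enc]
    refine Prod.ext ?_ (Prod.ext ?_ ?_) <;> simp only []
    · by_cases h : x 0 = a 0
      · simp [hs0, h]
      · have := (hx 0).resolve_left h
        by_cases h2 : b 0 = a 0 <;> simp [hs0, h, this, h2]
    · by_cases h : x 1 = a 1
      · simp [hs1, h]
      · have := (hx 1).resolve_left h
        by_cases h2 : b 1 = a 1 <;> simp [hs1, h, this, h2]
    · by_cases h : x 2 = a 2
      · simp [hs2, h]
      · have := (hx 2).resolve_left h
        by_cases h2 : b 2 = a 2 <;> simp [hs2, h, this, h2]
  have hZ := mem_enc z hz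
  have hA := mem_enc a ha
  have hB := mem_enc b hb
  have hminN : ∀ C ∈ LN, hdN (enc x) (enc z) ≤ hdN (enc x) C := by
    intro C hC
    obtain ⟨c, hc, rfl⟩ := enc_surj C hC
    rw [← hd_eq, ← hd_eq]
    exact hmin c hc
  rw [hex] at hminN
  have := keyN (enc a) hA (enc b) hB s0 s1 s2 (enc z) hZ hminN
  rcases this with h | h
  · exact Or.inl (enc_inj h)
  · exact Or.inr (enc_inj h)

theorem exampleCode_is_2TA :
    ∀ X ⊆ exampleCode, X.Finite → X.ncard ≤ 2 → ∀ x ∈ desc X,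
      ∀ z ∈ exampleCode,
        (∀ c ∈ exampleCode, hammingDist x z ≤ hammingDist x c) → z ∈ X := by
  classical
  intro X hXC hXfF hcard x hx z hzC hmin
  rcases X.eq_empty_or_nonempty with rfl | ⟨a, haX⟩
  · obtain ⟨w, hw, -⟩ := hx 0
    exact absurd hw (Set.notMem_empty w)
  by_cases hsub : X ⊆ {a}
  · -- singleton case
    have hxa : x = a := by
      funext i
      obtain ⟨w, hw, hwi⟩ := hx i
      rw [hwi, hsub hw]
    have h0 : hammingDist x z = 0 := by
      have := hmin a (hXC haX)
      rw [hxa] at this ⊢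
      simpa using this
    have : x = z := by rwa [hammingDist_eq_zero] at h0
    rw [← this, hxa]
    exact haX
  · obtain ⟨b, hbX, hba⟩ : ∃ b ∈ X, b ∉ ({a} : Set _) := Set.not_subset.mp hsub
    rw [Set.mem_singleton_iff] at hba
    -- every element of X is a or b
    have hXab : ∀ w ∈ X, w = a ∨ w = b := by
      intro w hwX
      by_contra hcon
      push_neg at hcon
      have h3 : ({w, a, b} : Set (Fin 3 → Fin 9)).ncard ≤ X.ncard := by
        apply Set.ncard_le_ncard _ hXfF
        intro u hu
        rcases hu with rfl | rfl | rfl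
        · exact hwX
        · exact haX
        · exact hbX
      have : ({w, a, b} : Set (Fin 3 → Fin 9)).ncard = 3 := by
        rw [Set.ncard_insert_of_notMem (by simp [hcon.1, hcon.2]),
          Set.ncard_insert_of_notMem (by simp [Ne.symm hba]), Set.ncard_singleton]
      omega
    have hxi : ∀ i, x i = a i ∨ x i = b i := by
      intro i
      obtain ⟨w, hw, hwi⟩ := hx i
      rcases hXab w hw with rfl | rfl
      · exact Or.inl hwi
      · exact Or.inr hwi
    rcases key_pair (hXC haX) (hXC hbX) hxi hzC hmin with rfl | rfl
    · exact haX
    · exact hbX
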